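/- Let a_1 < a_2 be positive integers and e_1, e_2 be positive integers, and set b_2 = a_2 - a_1. If the Young diagram with e_1 rows of length a_1 and e_2 rows of length a_2 is wide, then, as integers, max(0, e_2(a_1 - b_2), a_1(e_2 - b_2)) \le min(a_1 e_2, a_1(a_1 - e_1), a_1 e_2 - b_2(e_2 - b_2)); consequently there exists an integer x with max(0, e_2(a_1 - b_2), a_1(e_2 - b_2)) \le x \le min(a_1 e_2, a_1(a_1 - e_1), a_1 e_2 - b_2(e_2 - b_2)). -/

import Mathlib

/-- The multiset of row lengths of the Young diagram `Y(a;e)`: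
`e i` rows of length `a i` for `i = 1, ..., p`. -/
def rowMultiset (p : ℕ) (a e : ℕ → ℕ) : Multiset ℕ :=
  ∑ i ∈ Finset.Icc 1 p, Multiset.replicate (e i) (a i)

/-- The sum of the `w` largest elements of the multiset `S`
(the sum of all of `S` if `S` has at most `w` elements). -/
def topSum (S : Multiset ℕ) (w : ℕ) : ℕ :=
  ((Multiset.sort S (· ≤ ·)).reverse.take w).sum

/-- The sum of the lengths of the leftmost `w` columns of the Young diagram
whose multiset of row lengths is `S`. -/
def colSum (S : Multiset ℕ) (w : ℕ) : ℕ :=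
  ∑ c ∈ Finset.Icc 1 w, (S.filter (fun r => c ≤ r)).card

/-- A Young diagram with multiset of row lengths `R` is wide if every subdiagram formed
by a subset of the rows dominates its conjugate. -/
def Wide (R : Multiset ℕ) : Prop :=
  ∀ S : Multiset ℕ, S ≤ R → ∀ w : ℕ, 0 < w → colSum S w ≤ topSum S w

/-- A Young diagram with multiset of row lengths `R` is Latin if, listing its row lengths
as `l 1, ..., l m`, there is a filling `f` of its cells such that row `i` is filled by a
permutation of `1, ..., l i` and the entries in each column are pairwise distinct. -/
def IsLatin (R : Multiset ℕ) : Prop :=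
  ∃ (m : ℕ) (l : ℕ → ℕ) (f : ℕ → ℕ → ℕ),
    (Finset.Icc 1 m).val.map l = R ∧
    (∀ i ∈ Finset.Icc 1 m,
      Set.InjOn (f i) (Set.Icc 1 (l i)) ∧
      (Finset.Icc 1 (l i)).image (f i) = Finset.Icc 1 (l i)) ∧
    (∀ j, 1 ≤ j → ∀ i₁ ∈ Finset.Icc 1 m, ∀ i₂ ∈ Finset.Icc 1 m,
      j ≤ l i₁ → j ≤ l i₂ → f i₁ j = f i₂ j → i₁ = i₂)

/-- An allocation for the Young diagram `Y(a;e)` with `p` row blocks (where `a 0 = 0`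
and `b i = a i - a (i-1)`). -/
def HasAllocation (p : ℕ) (a e : ℕ → ℕ) : Prop :=
  ∃ z : ℕ → ℕ → ℕ → ℕ,
    (∀ i j, 1 ≤ j → j ≤ i → i ≤ p →
      ∑ k ∈ Finset.Icc 1 i, z i j k = e i * (a j - a (j - 1))) ∧
    (∀ i k, 1 ≤ k → k ≤ i → i ≤ p →
      ∑ j ∈ Finset.Icc 1 i, z i j k = e i * (a k - a (k - 1))) ∧
    (∀ j k, 1 ≤ j → j ≤ p → 1 ≤ k → k ≤ p →
      ∑ i ∈ Finset.Icc (max j k) p, z i j k ≤ (a j - a (j - 1)) * (a k - a (k - 1)))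

/-- `sc a e j k`: the sum of the lengths of the leftmost `a j` columns of the tail
subdiagram `Y_k`. -/
def sc (a e : ℕ → ℕ) (j k : ℕ) : ℕ :=
  ∑ i ∈ Finset.Icc 1 k, e i * min (a i) (a j)

/-- `sr a e j k`: the sum of the lengths of the top `a j` rows of the tail
subdiagram `Y_k`. -/
def sr (a e : ℕ → ℕ) (j k : ℕ) : ℕ :=
  topSum (rowMultiset k a e) (a j)

/-- `se e m k = ∑_{t=m}^{k} e t`. -/
def se (e : ℕ → ℕ) (m k : ℕ) : ℕ :=
  ∑ t ∈ Finset.Icc m k, e t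

lemma colSum_replicate (n a w : ℕ) : colSum (Multiset.replicate n a) w = n * min w a := by
  unfold colSum
  have h : ∀ c, ((Multiset.replicate n a).filter (fun r => c ≤ r)).card
      = if c ≤ a then n else 0 := by
    intro c
    by_cases h : c ≤ a
    · rw [Multiset.filter_eq_self.mpr, if_pos h, Multiset.card_replicate]
      intro b hb
      rw [Multiset.eq_of_mem_replicate hb]; exact h
    · rw [Multiset.filter_eq_nil.mpr, if_neg h, Multiset.card_zero]
      intro b hb hc
      exact h (by rwa [← Multiset.eq_of_mem_replicate hb])
  simp only [h]
  rw [← Finset.sum_filter]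
  have : (Finset.Icc 1 w).filter (fun c => c ≤ a) = Finset.Icc 1 (min w a) := by
    ext c; simp; omega
  rw [this, Finset.sum_const, Nat.card_Icc, smul_eq_mul, Nat.add_sub_cancel, Nat.mul_comm]

lemma colSum_add (S T : Multiset ℕ) (w : ℕ) : colSum (S + T) w = colSum S w + colSum T w := by
  unfold colSum
  simp [Multiset.filter_add, Finset.sum_add_distrib]

lemma sorted_replicate (n a : ℕ) : (List.replicate n a).Pairwise (· ≤ ·) := by
  induction n with
  | zero => simp
  | succ n ih =>
      rw [List.replicate_succ, List.pairwise_cons]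
      exact ⟨fun b hb => le_of_eq (List.eq_of_mem_replicate hb).symm, ih⟩

lemma sort_two (e₁ e₂ a₁ a₂ : ℕ) (h : a₁ ≤ a₂) :
    Multiset.sort (Multiset.replicate e₁ a₁ + Multiset.replicate e₂ a₂) (· ≤ ·)
      = List.replicate e₁ a₁ ++ List.replicate e₂ a₂ := by
  refine (fun hp h1 h2 => List.Perm.eq_of_pairwise' (r := (· ≤ ·)) h1 h2 hp) ?_ ?_ ?_
  · rw [← Multiset.coe_eq_coe]
    rw [Multiset.sort_eq, ← Multiset.coe_replicate, ← Multiset.coe_replicate, ← Multiset.coe_add]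
  · exact Multiset.pairwise_sort _ _
  · rw [List.pairwise_append]
    refine ⟨sorted_replicate _ _, sorted_replicate _ _, ?_⟩
    intro x hx y hy
    rw [List.eq_of_mem_replicate hx, List.eq_of_mem_replicate hy]; exact h

lemma topSum_two (e₁ e₂ a₁ a₂ w : ℕ) (h : a₁ ≤ a₂) :
    topSum (Multiset.replicate e₁ a₁ + Multiset.replicate e₂ a₂) w
      = min w e₂ * a₂ + min (w - e₂) e₁ * a₁ := by
  unfold topSum
  rw [sort_two _ _ _ _ h, List.reverse_append, List.reverse_replicate, List.reverse_replicate,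
    List.take_append, List.take_replicate, List.take_replicate,
    List.sum_append, List.sum_replicate, List.sum_replicate, List.length_replicate]
  simp [smul_eq_mul]


lemma key_ineq (a₁ e₁ e₂ b₂ : ℤ)
    (ha1' : 1 ≤ a₁) (he1' : 1 ≤ e₁) (he2' : 1 ≤ e₂) (hb1 : 1 ≤ b₂)
    (k1 : e₁ ≤ a₁) (k2 : e₁ + e₂ ≤ a₁ + b₂)
    (k3 : a₁ * (e₁ + e₂) ≤ a₁ * a₁ + e₂ * b₂) :
    max 0 (max (e₂ * (a₁ - b₂)) (a₁ * (e₂ - b₂))) ≤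
      min (a₁ * e₂) (min (a₁ * (a₁ - e₁)) (a₁ * e₂ - b₂ * (e₂ - b₂))) := by
  have p1 : (0:ℤ) ≤ e₂ * b₂ := mul_nonneg (by linarith) (by linarith)
  have p2 : (0:ℤ) ≤ a₁ * b₂ := mul_nonneg (by linarith) (by linarith)
  have p3 : (0:ℤ) ≤ a₁ * (a₁ - e₁) := mul_nonneg (by linarith) (by linarith)
  have p4 : (0:ℤ) ≤ a₁ * (a₁ + b₂ - e₁ - e₂) := mul_nonneg (by linarith) (by linarith)
  have p5 : (0:ℤ) ≤ e₂ * (a₁ + b₂ - e₂) := mul_nonneg (by linarith) (by linarith)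
  have p6 : (0:ℤ) ≤ b₂ * (a₁ + b₂ - e₂) := mul_nonneg (by linarith) (by linarith)
  have p7 : (0:ℤ) ≤ (e₂ - b₂) * (e₂ - b₂) := mul_self_nonneg _
  have p8 : (0:ℤ) ≤ b₂ * b₂ := mul_self_nonneg _
  simp only [le_min_iff, max_le_iff]
  refine ⟨⟨?_, ?_, ?_⟩, ⟨?_, ?_, ?_⟩, ⟨?_, ?_, ?_⟩⟩
  · positivity
  · nlinarith [p1]
  · nlinarith [p2]
  · nlinarith [p3]
  · nlinarith [k3]
  · nlinarith [p4]
  · nlinarith [p5, p7]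
  · nlinarith [p8]
  · nlinarith [p6]

lemma fact1 (a₁ a₂ e₁ e₂ : ℕ) (ha1 : 0 < a₁)
    (hw : Wide (Multiset.replicate e₁ a₁ + Multiset.replicate e₂ a₂)) : e₁ ≤ a₁ := by
  have h := hw (Multiset.replicate e₁ a₁) (Multiset.le_add_right _ _) a₁ ha1
  rw [colSum_replicate] at h
  have hts : topSum (Multiset.replicate e₁ a₁) a₁ = min a₁ e₁ * a₁ := by
    have := topSum_two e₁ 0 a₁ a₁ a₁ le_rfl
    simpa using this
  rw [hts, min_self] at h
  have := Nat.le_of_mul_le_mul_right h ha1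
  omega

lemma fact2 (a₁ a₂ e₁ e₂ : ℕ) (ha1 : 0 < a₁) (hle : a₁ ≤ a₂) (he2 : 0 < e₂)
    (hw : Wide (Multiset.replicate e₁ a₁ + Multiset.replicate e₂ a₂)) : e₁ + e₂ ≤ a₂ := by
  have h := hw _ le_rfl 1 one_pos
  rw [colSum_add, colSum_replicate, colSum_replicate, topSum_two _ _ _ _ _ hle] at h
  have h1 : min 1 a₁ = 1 := by omega
  have h2 : min 1 a₂ = 1 := by omega
  have h3 : min 1 e₂ = 1 := by omega
  have h4 : (1 - e₂) = 0 := by omega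
  rw [h1, h2, h3, h4] at h
  simpa using h

lemma fact3 (a₁ a₂ e₁ e₂ : ℕ) (ha1 : 0 < a₁) (hle : a₁ ≤ a₂)
    (hw : Wide (Multiset.replicate e₁ a₁ + Multiset.replicate e₂ a₂)) :
    a₁ * (e₁ + e₂) ≤ a₁ * a₁ + e₂ * (a₂ - a₁) := by
  have h := hw _ le_rfl a₁ ha1
  rw [colSum_add, colSum_replicate, colSum_replicate, topSum_two _ _ _ _ _ hle] at h
  have h1 : min a₁ a₂ = a₁ := by omega
  rw [min_self, h1] at h
  have hb1 : min a₁ e₂ * a₂ ≤ min a₁ e₂ * a₁ + e₂ * (a₂ - a₁) := by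
    have heq : min a₁ e₂ * a₂ = min a₁ e₂ * a₁ + min a₁ e₂ * (a₂ - a₁) := by
      rw [← Nat.mul_add]; congr 1; omega
    have hle2 : min a₁ e₂ * (a₂ - a₁) ≤ e₂ * (a₂ - a₁) :=
      Nat.mul_le_mul_right _ (min_le_right _ _)
    omega
  have hb2' : min a₁ e₂ * a₁ + min (a₁ - e₂) e₁ * a₁ ≤ a₁ * a₁ := by
    have hm : min a₁ e₂ + min (a₁ - e₂) e₁ ≤ a₁ := by omega
    calc min a₁ e₂ * a₁ + min (a₁ - e₂) e₁ * a₁ = (min a₁ e₂ + min (a₁ - e₂) e₁) * a₁ := by ring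
      _ ≤ a₁ * a₁ := Nat.mul_le_mul_right _ hm
  nlinarith


/-- for a wide Young diagram with two distinct row lengths, the interval
`I_x` of admissible values for `x = z_{211}` is nonempty (all computed in `ℤ`). -/
theorem Ix_nonempty (a₁ a₂ e₁ e₂ : ℕ)
    (ha1 : 0 < a₁) (ha12 : a₁ < a₂) (he1 : 0 < e₁) (he2 : 0 < e₂)
    (b₂ : ℤ) (hb2 : b₂ = (a₂ : ℤ) - (a₁ : ℤ))
    (hw : Wide (Multiset.replicate e₁ a₁ + Multiset.replicate e₂ a₂)) :
    max 0 (max ((e₂ : ℤ) * ((a₁ : ℤ) - b₂)) ((a₁ : ℤ) * ((e₂ : ℤ) - b₂))) ≤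
        min ((a₁ : ℤ) * (e₂ : ℤ))
          (min ((a₁ : ℤ) * ((a₁ : ℤ) - (e₁ : ℤ)))
            ((a₁ : ℤ) * (e₂ : ℤ) - b₂ * ((e₂ : ℤ) - b₂))) ∧
      ∃ x : ℤ,
        max 0 (max ((e₂ : ℤ) * ((a₁ : ℤ) - b₂)) ((a₁ : ℤ) * ((e₂ : ℤ) - b₂))) ≤ x ∧
        x ≤ min ((a₁ : ℤ) * (e₂ : ℤ))
          (min ((a₁ : ℤ) * ((a₁ : ℤ) - (e₁ : ℤ)))
            ((a₁ : ℤ) * (e₂ : ℤ) - b₂ * ((e₂ : ℤ) - b₂))) := by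
  have hle : a₁ ≤ a₂ := le_of_lt ha12
  have k1 : (e₁ : ℤ) ≤ a₁ := by exact_mod_cast fact1 a₁ a₂ e₁ e₂ ha1 hw
  have k2 : (e₁ : ℤ) + e₂ ≤ a₁ + b₂ := by
    have := fact2 a₁ a₂ e₁ e₂ ha1 hle he2 hw
    rw [hb2]; omega
  have k3 : (a₁ : ℤ) * ((e₁:ℤ) + e₂) ≤ (a₁:ℤ) * a₁ + e₂ * b₂ := by
    have f3 := fact3 a₁ a₂ e₁ e₂ ha1 hle hw
    zify [hle] at f3; rw [hb2]; exact f3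
  have hb1 : (1 : ℤ) ≤ b₂ := by rw [hb2]; omega
  have key := key_ineq (a₁:ℤ) (e₁:ℤ) (e₂:ℤ) b₂ (by exact_mod_cast ha1) (by exact_mod_cast he1)
    (by exact_mod_cast he2) hb1 k1 k2 k3
  exact ⟨key, ⟨_, le_refl _, key⟩⟩
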